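/- Let G be a group and z a central element of G with z ≠ 1 and z² = 1. Let H be a subgroup of G with z ∉ H such that for every g ∈ G either g ∈ H or z·g ∈ H. Let K be a subgroup of G with z ∈ K such that [H,H] = H ∩ K. Then [G,G] = H ∩ K, and H ∩ K is a subgroup of index 2 in K. -/

import Mathlib

open scoped commutatorElement


/-- Let `z` be a nontrivial central element of order dividing 2, `H` a subgroup avoiding `z`
with `g ∈ H` or `z·g ∈ H` for every `g`, and `K` a subgroup containing `z` with
`[H,H] = H ⊓ K`.  Then `[G,G] = H ⊓ K` and `H ⊓ K` has index 2 in `K`. -/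
theorem commutator_eq_inf_and_index_two {G : Type*} [Group G]
    (z : G) (hz : z ∈ Subgroup.center G) (hz1 : z ≠ 1) (hz2 : z ^ 2 = 1)
    (H : Subgroup G) (hzH : z ∉ H) (hcover : ∀ g : G, g ∈ H ∨ z * g ∈ H)
    (K : Subgroup G) (hzK : z ∈ K) (hHK : ⁅H, H⁆ = H ⊓ K) :
    commutator G = H ⊓ K ∧ (H ⊓ K).relIndex K = 2 := by
  have hzc : ∀ g : G, z * g = g * z := fun g =>
    ((Subgroup.mem_center_iff.mp hz) g).symm
  have hleft : ∀ a b : G, ⁅z * a, b⁆ = ⁅a, b⁆ := by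
    intro a b
    simp only [commutatorElement_def, mul_inv_rev]
    calc z * a * b * (a⁻¹ * z⁻¹) * b⁻¹ = z * z⁻¹ * (a * b * a⁻¹ * b⁻¹) := by
          rw [show z * a * b * (a⁻¹ * z⁻¹) * b⁻¹ = z * (a * b * a⁻¹) * z⁻¹ * b⁻¹ by group,
            hzc (a * b * a⁻¹)]; group
      _ = a * b * a⁻¹ * b⁻¹ := by group
  have hright : ∀ a b : G, ⁅a, z * b⁆ = ⁅a, b⁆ := by
    intro a b
    simp only [commutatorElement_def, mul_inv_rev]
    rw [hzc b, show a * (b * z) * a⁻¹ * (b⁻¹ * z⁻¹) = a * b * (z * a⁻¹) * (b⁻¹ * z⁻¹) by group,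
      hzc a⁻¹, show a * b * (a⁻¹ * z) * (b⁻¹ * z⁻¹) = a * b * a⁻¹ * (z * b⁻¹) * z⁻¹ by group,
      hzc b⁻¹]
    group
  have hcomm : commutator G = H ⊓ K := by
    rw [← hHK]
    apply le_antisymm
    · rw [commutator_def, Subgroup.commutator_le]
      intro a _ b _
      have hca := hcover a
      have hcb := hcover b
      have key : ∀ a' b' : G, a' ∈ H → b' ∈ H → ⁅a', b'⁆ ∈ ⁅H, H⁆ := fun a' b' ha hb =>
        Subgroup.commutator_mem_commutator ha hb
      rcases hca with ha | ha <;> rcases hcb with hb | hb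
      · exact key a b ha hb
      · rw [show b = z * (z * b) by rw [← mul_assoc, ← pow_two, hz2, one_mul], hright]
        exact key a (z * b) ha hb
      · rw [show a = z * (z * a) by rw [← mul_assoc, ← pow_two, hz2, one_mul], hleft]
        exact key (z * a) b ha hb
      · rw [show a = z * (z * a) by rw [← mul_assoc, ← pow_two, hz2, one_mul],
          show b = z * (z * b) by rw [← mul_assoc, ← pow_two, hz2, one_mul], hleft, hright]
        exact key (z * a) (z * b) ha hb
    · exact Subgroup.commutator_mono le_top le_top
  refine ⟨hcomm, ?_⟩
  rw [Subgroup.relIndex, Subgroup.index_eq_two_iff]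
  refine ⟨⟨z, hzK⟩, fun b => ?_⟩
  obtain ⟨b, hbK⟩ := b
  simp only [Subgroup.mem_subgroupOf, Subgroup.mem_inf, Subgroup.coe_mul]
  rcases hcover b with hb | hb
  · refine Or.inr ⟨⟨hb, hbK⟩, fun hmem => ?_⟩
    have : b * z ∈ H := hmem.1
    exact hzH (by simpa using H.mul_mem (H.inv_mem hb) this)
  · refine Or.inl ⟨⟨by rw [← hzc]; exact hb, K.mul_mem hbK hzK⟩, fun hmem => ?_⟩
    exact hzH (by simpa [mul_assoc] using H.mul_mem hb (H.inv_mem hmem.1))
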